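/- Let A be a graded-commutative superalgebra over a field of characteristic not 2, R = A_0^ev ⊕ A_1^odd, and I a homogeneous radical ideal of R. Then I^+ := I ⊕ A_0^odd ⊕ A_1^ev is a radical ideal of A in the sense that I^+ equals the set of all x ∈ A with x^n ∈ I^+ for some natural number n. -/

import Mathlib

/-- A graded-commutative graded superalgebra over `k`: a `ℤ × ZMod 2`-graded
`k`-algebra satisfying the sign rule `ab = (-1)^(|a|·|b| + deg a · deg b) ba`
for homogeneous elements. -/
structure GradedSuperalgebra (k A : Type) [Field k] [Ring A] [Algebra k A] where
  grading : ℤ × ZMod 2 → Submodule k A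
  one_mem : (1 : A) ∈ grading (0, 0)
  mul_mem : ∀ {i j : ℤ × ZMod 2} {a b : A},
    a ∈ grading i → b ∈ grading j → a * b ∈ grading (i + j)
  internal : DirectSum.IsInternal grading
  comm : ∀ {m n : ℤ} {s t : ZMod 2} {a b : A}, a ∈ grading (m, s) → b ∈ grading (n, t) →
    a * b = ((-1 : k) ^ ((s * t).val + (m * n).natAbs)) • (b * a)

namespace GradedSuperalgebra

variable {k A : Type} [Field k] [Ring A] [Algebra k A] (GS : GradedSuperalgebra k A)

/-- The sum of the graded pieces whose index satisfies a predicate. -/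
def piece (P : ℤ × ZMod 2 → Prop) : Submodule k A :=
  ⨆ p : {p : ℤ × ZMod 2 // P p}, GS.grading p

/-- `R = A₀ᵉᵛ ⊕ A₁ᵒᵈᵈ`: even ℤ-degree with parity `0` together with odd ℤ-degree
with parity `1`; an ordinary-commutative subalgebra of `A`. -/
def Rsub : Submodule k A :=
  GS.piece fun p => (Even p.1 ∧ p.2 = 0) ∨ (Odd p.1 ∧ p.2 = 1)

/-- `A₀ᵉᵛ`: even ℤ-degree, parity `0`. -/
def A0ev : Submodule k A := GS.piece fun p => Even p.1 ∧ p.2 = 0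

/-- `A₁ᵒᵈᵈ`: odd ℤ-degree, parity `1`. -/
def A1odd : Submodule k A := GS.piece fun p => Odd p.1 ∧ p.2 = 1

/-- `A₀ᵒᵈᵈ`: odd ℤ-degree, parity `0`. -/
def A0odd : Submodule k A := GS.piece fun p => Odd p.1 ∧ p.2 = 0

/-- `A₁ᵉᵛ`: even ℤ-degree, parity `1`. -/
def A1ev : Submodule k A := GS.piece fun p => Even p.1 ∧ p.2 = 1

/-- A submodule of `A` is homogeneous if it is spanned by its homogeneous elements. -/
def IsHomogeneous (I : Submodule k A) : Prop :=
  I = Submodule.span k {x : A | x ∈ I ∧ ∃ p, x ∈ GS.grading p}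

end GradedSuperalgebra

/-! ### Auxiliary lemmas -/

namespace GradedSuperalgebra

variable {k A : Type} [Field k] [Ring A] [Algebra k A] (GS : GradedSuperalgebra k A)

lemma grading_le_piece {P : ℤ × ZMod 2 → Prop} {p : ℤ × ZMod 2} (hp : P p) :
    GS.grading p ≤ GS.piece P :=
  le_iSup (fun q : {q : ℤ × ZMod 2 // P q} => GS.grading q.1) ⟨p, hp⟩

lemma piece_le {P : ℤ × ZMod 2 → Prop} {M : Submodule k A}
    (h : ∀ p, P p → GS.grading p ≤ M) : GS.piece P ≤ M :=
  iSup_le fun q => h q.1 q.2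

lemma piece_induction {P : ℤ × ZMod 2 → Prop} {C : A → Prop}
    (hhom : ∀ p a, P p → a ∈ GS.grading p → C a)
    (h0 : C 0) (hadd : ∀ a b, C a → C b → C (a + b)) :
    ∀ x ∈ GS.piece P, C x := by
  intro x hx
  exact Submodule.iSup_induction (motive := C)
    (fun q : {q : ℤ × ZMod 2 // P q} => GS.grading q.1) hx
    (fun q a ha => hhom q.1 a q.2 ha) h0 hadd

lemma piece_mul {P Q R' : ℤ × ZMod 2 → Prop}
    (h : ∀ p q, P p → Q q → R' (p + q)) :
    ∀ a ∈ GS.piece P, ∀ b ∈ GS.piece Q, a * b ∈ GS.piece R' := by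
  refine GS.piece_induction (fun p a hp ha => ?_) (fun b _ => by simp) ?_
  · refine GS.piece_induction (fun q b hq hb => ?_) (by simp) (fun b c hb hc => ?_)
    · exact GS.grading_le_piece (h p q hp hq) (GS.mul_mem ha hb)
    · simpa [mul_add] using (GS.piece R').add_mem hb hc
  · intro a b ha hb c hc
    simpa [add_mul] using (GS.piece R').add_mem (ha c hc) (hb c hc)

/-- Elements of pieces with incompatible predicates vanish. -/
lemma piece_eq_zero {P Q : ℤ × ZMod 2 → Prop} (h : ∀ p, P p → Q p → False) :
    ∀ x : A, x ∈ GS.piece P → x ∈ GS.piece Q → x = 0 := by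
  haveI := GS.internal.chooseDecomposition
  have key : ∀ (P' : ℤ × ZMod 2 → Prop), ∀ x ∈ GS.piece P',
      ∀ p, ¬ P' p → (DirectSum.decompose GS.grading x p : A) = 0 := by
    intro P'
    refine GS.piece_induction (fun q a hq ha p hp => ?_)
      (fun p _ => by rw [DirectSum.decompose_zero]; rfl)
      (fun a b ha hb p hp => ?_)
    · exact DirectSum.decompose_of_mem_ne _ ha (fun hqp => hp (hqp ▸ hq))
    · rw [DirectSum.decompose_add, DirectSum.add_apply, Submodule.coe_add,
        ha p hp, hb p hp, add_zero]
  intro x hxP hxQ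
  classical
  rw [← DirectSum.sum_support_decompose GS.grading x]
  refine Finset.sum_eq_zero fun p _ => ?_
  by_cases hp : P p
  · exact key Q x hxQ p (fun hQp => h p hp hQp)
  · exact key P x hxP p hp

lemma homog_sq_zero (h2 : (2 : k) ≠ 0) {m : ℤ} {s : ZMod 2} {a : A}
    (ha : a ∈ GS.grading (m, s)) (hodd : Odd ((s * s).val + (m * m).natAbs)) :
    a * a = 0 := by
  have h := GS.comm ha ha
  rw [hodd.neg_one_pow, neg_one_smul] at h
  have h3 : (2 : k) • (a * a) = 0 := by
    rw [two_smul]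
    rw [eq_neg_iff_add_eq_zero] at h
    exact h
  exact (smul_eq_zero.mp h3).resolve_left h2

end GradedSuperalgebra

section parity

/-- Predicate for `R`. -/
private def PR (p : ℤ × ZMod 2) : Prop := (Even p.1 ∧ p.2 = 0) ∨ (Odd p.1 ∧ p.2 = 1)

/-- Predicate for `S = A₀ᵒᵈᵈ ⊕ A₁ᵉᵛ`. -/
private def PS (p : ℤ × ZMod 2) : Prop := (Odd p.1 ∧ p.2 = 0) ∨ (Even p.1 ∧ p.2 = 1)

private lemma PR_or_PS (p : ℤ × ZMod 2) : PR p ∨ PS p := by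
  have h2 : ∀ s : ZMod 2, s = 0 ∨ s = 1 := by decide
  rcases Int.even_or_odd p.1 with he | ho <;> rcases h2 p.2 with h0 | h1
  · exact Or.inl (Or.inl ⟨he, h0⟩)
  · exact Or.inr (Or.inr ⟨he, h1⟩)
  · exact Or.inr (Or.inl ⟨ho, h0⟩)
  · exact Or.inl (Or.inr ⟨ho, h1⟩)

private lemma PR_PS_incompat (p : ℤ × ZMod 2) : PR p → PS p → False := by
  rintro (⟨he, h0⟩ | ⟨ho, h1⟩) (⟨ho', h0'⟩ | ⟨he', h1'⟩) <;>
    first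
      | exact (Int.not_odd_iff_even.mpr he) ho'
      | exact (Int.not_odd_iff_even.mpr he') ho
      | simp_all
      | exact absurd (h0 ▸ h1 : (0 : ZMod 2) = 1) (by decide)

private lemma PR_add_PR {p q : ℤ × ZMod 2} (hp : PR p) (hq : PR q) : PR (p + q) := by
  rcases hp with ⟨he, h0⟩ | ⟨ho, h1⟩ <;> rcases hq with ⟨he', h0'⟩ | ⟨ho', h1'⟩
  · exact Or.inl ⟨he.add he', by rw [Prod.snd_add, h0, h0']; decide⟩
  · exact Or.inr ⟨he.add_odd ho', by rw [Prod.snd_add, h0, h1']; decide⟩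
  · exact Or.inr ⟨ho.add_even he', by rw [Prod.snd_add, h1, h0']; decide⟩
  · exact Or.inl ⟨ho.add_odd ho', by rw [Prod.snd_add, h1, h1']; decide⟩

private lemma PR_add_PS {p q : ℤ × ZMod 2} (hp : PR p) (hq : PS q) : PS (p + q) := by
  rcases hp with ⟨he, h0⟩ | ⟨ho, h1⟩ <;> rcases hq with ⟨ho', h0'⟩ | ⟨he', h1'⟩
  · exact Or.inl ⟨he.add_odd ho', by rw [Prod.snd_add, h0, h0']; decide⟩
  · exact Or.inr ⟨he.add he', by rw [Prod.snd_add, h0, h1']; decide⟩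
  · exact Or.inr ⟨ho.add_odd ho', by rw [Prod.snd_add, h1, h0']; decide⟩
  · exact Or.inl ⟨ho.add_even he', by rw [Prod.snd_add, h1, h1']; decide⟩

private lemma PS_add_PR {p q : ℤ × ZMod 2} (hp : PS p) (hq : PR q) : PS (p + q) := by
  rcases hp with ⟨ho, h0⟩ | ⟨he, h1⟩ <;> rcases hq with ⟨he', h0'⟩ | ⟨ho', h1'⟩
  · exact Or.inl ⟨ho.add_even he', by rw [Prod.snd_add, h0, h0']; decide⟩
  · exact Or.inr ⟨ho.add_odd ho', by rw [Prod.snd_add, h0, h1']; decide⟩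
  · exact Or.inr ⟨he.add he', by rw [Prod.snd_add, h1, h0']; decide⟩
  · exact Or.inl ⟨he.add_odd ho', by rw [Prod.snd_add, h1, h1']; decide⟩

private lemma PS_add_PS {p q : ℤ × ZMod 2} (hp : PS p) (hq : PS q) : PR (p + q) := by
  rcases hp with ⟨ho, h0⟩ | ⟨he, h1⟩ <;> rcases hq with ⟨ho', h0'⟩ | ⟨he', h1'⟩
  · exact Or.inl ⟨ho.add_odd ho', by rw [Prod.snd_add, h0, h0']; decide⟩
  · exact Or.inr ⟨ho.add_even he', by rw [Prod.snd_add, h0, h1']; decide⟩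
  · exact Or.inr ⟨he.add_odd ho', by rw [Prod.snd_add, h1, h0']; decide⟩
  · exact Or.inl ⟨he.add he', by rw [Prod.snd_add, h1, h1']; decide⟩

private lemma PS_sq_odd {p : ℤ × ZMod 2} (hp : PS p) :
    Odd ((p.2 * p.2).val + (p.1 * p.1).natAbs) := by
  rcases hp with ⟨ho, h0⟩ | ⟨he, h1⟩
  · rw [h0]
    simpa using (Int.natAbs_odd.mpr (ho.mul ho))
  · rw [h1]
    have hev : Even (p.1 * p.1).natAbs := Int.natAbs_even.mpr (he.mul_right _)
    have h11 : ((1 : ZMod 2) * 1).val = 1 := rfl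
    rw [h11]
    exact hev.one_add

end parity

theorem statement2 {k A : Type} [Field k] [Ring A] [Algebra k A]
    (h2 : (2 : k) ≠ 0) (GS : GradedSuperalgebra k A)
    (I : Submodule k A)
    (hIR : I ≤ GS.Rsub)
    (hIdeal : ∀ r ∈ GS.Rsub, ∀ x ∈ I, r * x ∈ I ∧ x * r ∈ I)
    (hIhom : GS.IsHomogeneous I)
    (hIrad : ∀ x ∈ GS.Rsub, ∀ n : ℕ, x ^ n ∈ I → x ∈ I) :
    ∀ x : A, x ∈ I ⊔ GS.A0odd ⊔ GS.A1ev ↔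
      ∃ n : ℕ, x ^ n ∈ I ⊔ GS.A0odd ⊔ GS.A1ev := by
  classical
  have hSsup : GS.A0odd ⊔ GS.A1ev = GS.piece PS := by
    apply le_antisymm
    · exact sup_le (GS.piece_le fun p hp => GS.grading_le_piece (Or.inl hp))
        (GS.piece_le fun p hp => GS.grading_le_piece (Or.inr hp))
    · exact GS.piece_le fun p hp => hp.elim
        (fun h => le_trans (GS.grading_le_piece h) le_sup_left)
        (fun h => le_trans (GS.grading_le_piece h) le_sup_right)
  have hIplus : I ⊔ GS.A0odd ⊔ GS.A1ev = I ⊔ GS.piece PS := by rw [sup_assoc, hSsup]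
  have hRpiece : GS.Rsub = GS.piece PR := rfl
  have hRS_top : GS.Rsub ⊔ GS.piece PS = ⊤ := by
    rw [← GS.internal.submodule_iSup_eq_top]
    apply le_antisymm
    · apply sup_le
      · exact GS.piece_le fun p _ => le_iSup GS.grading p
      · exact GS.piece_le fun p _ => le_iSup GS.grading p
    · refine iSup_le fun p => ?_
      rcases PR_or_PS p with h | h
      · exact le_trans (GS.grading_le_piece h) le_sup_left
      · exact le_trans (GS.grading_le_piece h) le_sup_right
  have hmulRR := GS.piece_mul (fun p q (hp : PR p) (hq : PR q) => PR_add_PR hp hq)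
  have hmulRS := GS.piece_mul (fun p q (hp : PR p) (hq : PS q) => PR_add_PS hp hq)
  have hmulSR := GS.piece_mul (fun p q (hp : PS p) (hq : PR q) => PS_add_PR hp hq)
  have hmulSS := GS.piece_mul (fun p q (hp : PS p) (hq : PS q) => PS_add_PS hp hq)
  -- `S·S ⊆ I`
  have hSSI : ∀ a ∈ GS.piece PS, ∀ b ∈ GS.piece PS, a * b ∈ I := by
    refine GS.piece_induction (fun p a hp ha => ?_)
      (fun b _ => by simpa using I.zero_mem) (fun a a' hA hA' b hb => ?_)
    · obtain ⟨m, s⟩ := p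
      refine GS.piece_induction (fun q b hq hb => ?_)
        (by simpa using I.zero_mem) (fun b c hB hC => ?_)
      · obtain ⟨n', t⟩ := q
        have haS : a ∈ GS.piece PS := GS.grading_le_piece hp ha
        have hbS : b ∈ GS.piece PS := GS.grading_le_piece hq hb
        have habR : a * b ∈ GS.Rsub := hmulSS a haS b hbS
        have haa : a * a = 0 := GS.homog_sq_zero h2 ha (PS_sq_odd hp)
        have hba : b * a = ((-1 : k) ^ ((t * s).val + (n' * m).natAbs)) • (a * b) :=
          GS.comm hb ha
        have hab2 : (a * b) * (a * b) = 0 := by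
          calc (a * b) * (a * b) = a * ((b * a) * b) := by
                rw [mul_assoc a b (a * b), ← mul_assoc b a b]
            _ = a * ((((-1 : k) ^ ((t * s).val + (n' * m).natAbs)) • (a * b)) * b) := by
                rw [hba]
            _ = ((-1 : k) ^ ((t * s).val + (n' * m).natAbs)) • (a * ((a * b) * b)) := by
                rw [smul_mul_assoc, mul_smul_comm]
            _ = ((-1 : k) ^ ((t * s).val + (n' * m).natAbs)) • ((a * a) * (b * b)) := by
                rw [mul_assoc a b b, ← mul_assoc a a (b * b)]
            _ = 0 := by rw [haa, zero_mul, smul_zero]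
        refine hIrad (a * b) habR 2 ?_
        rw [pow_two, hab2]
        exact I.zero_mem
      · simpa [mul_add] using I.add_mem hB hC
    · simpa [add_mul] using I.add_mem (hA b hb) (hA' b hb)
  -- `I ⊔ S` is a two-sided ideal of `A`
  have hIdeal' : ∀ x : A, ∀ y ∈ I ⊔ GS.piece PS,
      x * y ∈ I ⊔ GS.piece PS ∧ y * x ∈ I ⊔ GS.piece PS := by
    intro x y hy
    have hx : x ∈ GS.Rsub ⊔ GS.piece PS := by rw [hRS_top]; trivial
    obtain ⟨r, hr, s, hs, rfl⟩ := Submodule.mem_sup.mp hx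
    obtain ⟨i, hi, t, ht, rfl⟩ := Submodule.mem_sup.mp hy
    have hiR : i ∈ GS.Rsub := hIR hi
    constructor
    · have h1 : r * i ∈ I := (hIdeal r hr i hi).1
      have h4 : s * t ∈ I := hSSI s hs t ht
      have h2 : r * t ∈ GS.piece PS := hmulRS r hr t ht
      have h3 : s * i ∈ GS.piece PS := hmulSR s hs i hiR
      have hE : (r + s) * (i + t) = (r * i + s * t) + (r * t + s * i) := by noncomm_ring
      rw [hE]
      exact add_mem (le_sup_left (α := Submodule k A) (I.add_mem h1 h4))
        (le_sup_right (α := Submodule k A) ((GS.piece PS).add_mem h2 h3))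
    · have h1 : i * r ∈ I := (hIdeal r hr i hi).2
      have h4 : t * s ∈ I := hSSI t ht s hs
      have h2 : i * s ∈ GS.piece PS := hmulRS i hiR s hs
      have h3 : t * r ∈ GS.piece PS := hmulSR t ht r hr
      have hE : (i + t) * (r + s) = (i * r + t * s) + (i * s + t * r) := by noncomm_ring
      rw [hE]
      exact add_mem (le_sup_left (α := Submodule k A) (I.add_mem h1 h4))
        (le_sup_right (α := Submodule k A) ((GS.piece PS).add_mem h2 h3))
  -- powers of elements of `R` stay in `R`
  have hpowR : ∀ r ∈ GS.Rsub, ∀ n : ℕ, r ^ n ∈ GS.Rsub := by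
    intro r hr n
    induction n with
    | zero =>
        rw [pow_zero]
        exact GS.grading_le_piece (P := PR) (p := ((0 : ℤ), (0 : ZMod 2)))
          (Or.inl ⟨Even.zero, rfl⟩) GS.one_mem
    | succ n ih => rw [pow_succ]; exact hmulRR _ ih _ hr
  -- `(r + s)^n ≡ r^n mod I ⊔ S`
  have hbin : ∀ (r s : A), s ∈ GS.piece PS → ∀ n : ℕ,
      (r + s) ^ n - r ^ n ∈ I ⊔ GS.piece PS := by
    intro r s hsS n
    induction n with
    | zero => simpa using Submodule.zero_mem _
    | succ n ih =>
        have key : (r + s) ^ (n + 1) - r ^ (n + 1) =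
            ((r + s) ^ n - r ^ n) * (r + s) + r ^ n * s := by
          rw [pow_succ, pow_succ]
          noncomm_ring
        rw [key]
        refine add_mem ((hIdeal' (r + s) _ ih).2) ?_
        exact (hIdeal' (r ^ n) s (le_sup_right (α := Submodule k A) hsS)).1
  intro x
  rw [hIplus]
  constructor
  · intro hx
    exact ⟨1, by simpa [pow_one] using hx⟩
  · rintro ⟨n, hxn⟩
    have hx : x ∈ GS.Rsub ⊔ GS.piece PS := by rw [hRS_top]; trivial
    obtain ⟨r, hr, s, hs, rfl⟩ := Submodule.mem_sup.mp hx
    have h1 : (r + s) ^ n - r ^ n ∈ I ⊔ GS.piece PS := hbin r s hs n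
    have h2 : r ^ n ∈ I ⊔ GS.piece PS := by
      have := Submodule.sub_mem _ hxn h1
      simpa using this
    obtain ⟨i, hi, t, ht, hrn⟩ := Submodule.mem_sup.mp h2
    have htR : t ∈ GS.Rsub := by
      have h3 : t = r ^ n - i := by rw [← hrn]; abel
      rw [h3]
      exact Submodule.sub_mem _ (hpowR r hr n) (hIR hi)
    have ht0 : t = 0 := GS.piece_eq_zero PR_PS_incompat t htR ht
    have hrnI : r ^ n ∈ I := by rw [← hrn, ht0, add_zero]; exact hi
    have hrI : r ∈ I := hIrad r hr n hrnI
    exact Submodule.mem_sup.mpr ⟨r, hrI, s, hs, rfl⟩
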